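/- arXiv:1405.4809 — 3 statements merged into one kernel-verified Lean document; each statement's English description precedes it below -/
import Mathlib

section
/- Let f : X → (-∞,+∞] be a c-antiderivative of a multivalued mapping M : X ⇉ Y, and let S be a nonempty subset of dom(M). Then (α_{[c,f|_S,M]})^c = γ_{[c,f^c|_{M(S)},M⁻¹]} and (γ_{[c,f|_S,M]})^c = α_{[c,f^c|_{M(S)},M⁻¹]}, where α and γ denote the pointwise infimum and pointwise supremum, respectively, of the indicated families. -/
noncomputable section

open scoped Classical

variable {X Y : Type*}

/-- The `c`-transform of `f : X → EReal`, a function on `Y`: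
`f^c(y) = sup_{x ∈ X} (c(x,y) - f(x))`. The `c`-transform of a function on `Y` is obtained
by applying this to the swapped coupling `fun y x => c x y`. -/
def cTransform (c : X → Y → ℝ) (f : X → EReal) : Y → EReal :=
  fun y => ⨆ x, ((c x y : EReal) - f x)

/-- `f` is proper: it takes no value `-∞` (i.e. maps into `(-∞, +∞]`) and is finite somewhere. -/
def ProperFn (f : X → EReal) : Prop :=
  (∀ x, f x ≠ ⊥) ∧ ∃ x, f x ≠ ⊤

/-- `f` is `c`-convex: it is proper and is the `c`-transform of some proper
`g : Y → (-∞, +∞]`. -/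
def IsCConvex (c : X → Y → ℝ) (f : X → EReal) : Prop :=
  ProperFn f ∧ ∃ g : Y → EReal, ProperFn g ∧ f = cTransform (fun y x => c x y) g

/-- The `c`-subdifferential of `f`:
`∂_c f(x) = { y | ∀ x', f(x) + c(x',y) ≤ f(x') + c(x,y) }`. -/
def cSubdiff (c : X → Y → ℝ) (f : X → EReal) (x : X) : Set Y :=
  { y | ∀ x', f x + (c x' y : EReal) ≤ f x' + (c x y : EReal) }

/-- The domain of a multivalued mapping `M : X ⇉ Y`. -/
def mapDom (M : X → Set Y) : Set X := { x | (M x).Nonempty }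

/-- The inverse multivalued mapping `M⁻¹ : Y ⇉ X`. -/
def mapInv (M : X → Set Y) : Y → Set X := fun y => { x | y ∈ M x }

/-- The image `M(S) = ⋃_{s ∈ S} M(s)` of a set `S` under a multivalued mapping. -/
def mapImageOn (M : X → Set Y) (S : Set X) : Set Y := { y | ∃ s ∈ S, y ∈ M s }

/-- The image `Im(M) = ⋃_{x ∈ X} M(x)` of a multivalued mapping. -/
def mapIm (M : X → Set Y) : Set Y := { y | ∃ x, y ∈ M x }

/-- `f` is a `c`-antiderivative of `M`: `f` is proper and `G(M) ⊆ G(∂_c f)`. -/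
def IsCAntiderivative (c : X → Y → ℝ) (f : X → EReal) (M : X → Set Y) : Prop :=
  ProperFn f ∧ ∀ x y, y ∈ M x → y ∈ cSubdiff c f x

/-- The family `𝒜_{[c, f|_S, M]}` of all `c`-convex `c`-antiderivatives of `M`
which coincide with `f` on `S`. -/
def cFamily (c : X → Y → ℝ) (f : X → EReal) (S : Set X) (M : X → Set Y) :
    Set (X → EReal) :=
  { h | IsCConvex c h ∧ (∀ x y, y ∈ M x → y ∈ cSubdiff c h x) ∧ ∀ s ∈ S, h s = f s }

/-- The upper envelope `γ_{[c, f|_S, M]}`. -/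
def upperEnv (c : X → Y → ℝ) (f : X → EReal) (S : Set X) (M : X → Set Y) : X → EReal :=
  fun x => ⨆ h ∈ cFamily c f S M, h x

/-- The lower envelope `α_{[c, f|_S, M]}`. -/
def lowerEnv (c : X → Y → ℝ) (f : X → EReal) (S : Set X) (M : X → Set Y) : X → EReal :=
  fun x => ⨅ h ∈ cFamily c f S M, h x

/-- The indicator function `ι_A` (0 on `A`, `+∞` off `A`). -/
def indicatorE (A : Set X) : X → EReal := fun x => if x ∈ A then 0 else ⊤

/-- Rockafellar's function `R_{[c,M,s]}`: the supremum over `n ≥ 1` and chains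
`x_1 = s`, `x_{n+1} = x`, `{(x_i, y_i)}_{i=1}^n ⊆ G(M)` of
`Σ_{i=1}^n [c(x_{i+1}, y_i) - c(x_i, y_i)]` (0-indexed below). -/
def rockafellar (c : X → Y → ℝ) (M : X → Set Y) (s : X) : X → EReal := fun x =>
  ⨆ (n : ℕ) (_ : 0 < n) (xs : ℕ → X) (ys : ℕ → Y)
      (_ : xs 0 = s ∧ ∀ i < n, ys i ∈ M (xs i)),
    (((∑ i ∈ Finset.range n,
        (c (if i + 1 < n then xs (i + 1) else x) (ys i) - c (xs i) (ys i))) : ℝ) : EReal)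

/-- `M` is cyclically monotone of order `n` with respect to `c`: for any `n` pairs
`{(x_i, y_i)}_{i=1}^n ⊆ G(M)`, setting `x_{n+1} = x_1`,
`0 ≤ Σ_{i=1}^n [c(x_i,y_i) - c(x_{i+1},y_i)]` (0-indexed below, cyclically). -/
def IsNCMonotone (c : X → Y → ℝ) (M : X → Set Y) (n : ℕ) : Prop :=
  ∀ (xs : ℕ → X) (ys : ℕ → Y), (∀ i < n, ys i ∈ M (xs i)) →
    0 ≤ ∑ i ∈ Finset.range n, (c (xs i) (ys i) - c (xs ((i + 1) % n)) (ys i))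

/-- `M` is `c`-cyclically monotone: `n`-`c`-monotone for all `n`. -/
def IsCCyclicallyMonotone (c : X → Y → ℝ) (M : X → Set Y) : Prop :=
  ∀ n : ℕ, IsNCMonotone c M n

section AuxLemmas

variable {c : X → Y → ℝ}

lemma esub_esub_cancel (r : ℝ) (b : EReal) : (r:EReal) - ((r:EReal) - b) = b := by
  induction b using EReal.rec with
  | bot => rw [EReal.coe_sub_bot, EReal.sub_top]
  | coe t => rw [← EReal.coe_sub, ← EReal.coe_sub]; norm_num
  | top => rw [EReal.sub_top, EReal.coe_sub_bot]

lemma coe_sub_iInf {ι : Sort*} (r : ℝ) (g : ι → EReal) :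
    (r:EReal) - (⨅ i, g i) = ⨆ i, ((r:EReal) - g i) := by
  apply le_antisymm
  · have h1 : (r:EReal) - (⨆ i, ((r:EReal) - g i)) ≤ ⨅ i, g i := le_iInf fun i =>
      calc (r:EReal) - (⨆ i, ((r:EReal) - g i)) ≤ (r:EReal) - ((r:EReal) - g i) :=
            EReal.sub_le_sub le_rfl (le_iSup (fun i => (r:EReal) - g i) i)
        _ = g i := esub_esub_cancel r (g i)
    calc (r:EReal) - (⨅ i, g i)
        ≤ (r:EReal) - ((r:EReal) - (⨆ i, ((r:EReal) - g i))) := EReal.sub_le_sub le_rfl h1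
      _ = _ := esub_esub_cancel _ _
  · exact iSup_le fun i => EReal.sub_le_sub le_rfl (iInf_le _ i)

lemma iSup_add_coe {ι : Sort*} (r : ℝ) (g : ι → EReal) :
    (⨆ i, g i) + (r:EReal) = ⨆ i, (g i + (r:EReal)) := by
  apply le_antisymm
  · have h1 : ∀ i, g i ≤ (⨆ i, (g i + (r:EReal))) - (r:EReal) := fun i =>
      calc g i = g i + (r:EReal) - (r:EReal) := (EReal.add_sub_cancel_right).symm
        _ ≤ _ := EReal.sub_le_sub (le_iSup (fun i => g i + (r:EReal)) i) le_rfl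
    calc (⨆ i, g i) + (r:EReal) ≤ ((⨆ i, (g i + (r:EReal))) - (r:EReal)) + (r:EReal) :=
          add_le_add_left (iSup_le h1) _
      _ = _ := EReal.sub_add_cancel
  · exact iSup_le fun i => add_le_add_left (le_iSup _ i) _

lemma subdiff_finite {h : X → EReal} {x : X} {y : Y}
    (hb : ∀ x, h x ≠ ⊥) (hfin : ∃ x, h x ≠ ⊤) (hy : y ∈ cSubdiff c h x) :
    ∃ t : ℝ, h x = (t : EReal) := by
  obtain ⟨x1, hx1⟩ := hfin
  obtain ⟨u, hu⟩ : ∃ u : ℝ, h x1 = (u : EReal) := ⟨_, (EReal.coe_toReal hx1 (hb x1)).symm⟩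
  have h1 := hy x1
  rw [hu, ← EReal.coe_add] at h1
  have hne : h x ≠ ⊤ := by
    intro htop
    rw [htop, EReal.top_add_coe] at h1
    exact (EReal.coe_lt_top _).not_ge h1
  exact ⟨_, (EReal.coe_toReal hne (hb x)).symm⟩

lemma cTransform_subdiff_eq {h : X → EReal} {x : X} {y : Y}
    (hb : ∀ x, h x ≠ ⊥) (hy : y ∈ cSubdiff c h x) {t : ℝ} (ht : h x = (t : EReal)) :
    cTransform c h y = ((c x y - t : ℝ) : EReal) := by
  apply le_antisymm
  · apply iSup_le; intro x'
    rcases eq_or_ne (h x') ⊤ with h' | h'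
    · rw [h', EReal.sub_top]; exact bot_le
    · obtain ⟨u, hu⟩ : ∃ u : ℝ, h x' = (u : EReal) := ⟨_, (EReal.coe_toReal h' (hb x')).symm⟩
      have h1 := hy x'
      rw [ht, hu] at h1
      rw [hu, ← EReal.coe_sub]
      norm_cast at h1 ⊢
      linarith
  · have h2 : ((c x y - t : ℝ) : EReal) = (c x y : EReal) - h x := by
      rw [ht, ← EReal.coe_sub]
    rw [h2]
    exact le_iSup (fun x' => (c x' y : EReal) - h x') x

lemma cTransform_anti {h1 h2 : X → EReal} (h : ∀ x, h1 x ≤ h2 x) :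
    ∀ y, cTransform c h2 y ≤ cTransform c h1 y :=
  fun _ => iSup_mono fun _ => EReal.sub_le_sub le_rfl (h _)

lemma double_le (c : X → Y → ℝ) (h : X → EReal) (x : X) :
    cTransform (fun y x => c x y) (cTransform c h) x ≤ h x := by
  apply iSup_le; intro y
  calc (c x y : EReal) - cTransform c h y
      ≤ (c x y : EReal) - ((c x y : EReal) - h x) :=
        EReal.sub_le_sub le_rfl (le_iSup (fun x' => (c x' y : EReal) - h x') x)
    _ = h x := esub_esub_cancel _ _

lemma cconvex_le_double {h : X → EReal} (hc : IsCConvex c h) (x : X) :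
    h x ≤ cTransform (fun y x => c x y) (cTransform c h) x := by
  obtain ⟨_, g, _, rfl⟩ := hc
  exact cTransform_anti (c := fun y x => c x y)
    (h1 := cTransform c (cTransform (fun y x => c x y) g)) (h2 := g)
    (fun y => double_le (fun y x => c x y) g y) x

lemma subdiff_dual {f : X → EReal} (hb : ∀ x, f x ≠ ⊥) (hfin : ∃ x, f x ≠ ⊤)
    {x : X} {y : Y} (hy : y ∈ cSubdiff c f x) :
    x ∈ cSubdiff (fun y x => c x y) (cTransform c f) y := by
  obtain ⟨t, ht⟩ := subdiff_finite hb hfin hy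
  intro y'
  show cTransform c f y + (c x y' : EReal) ≤ cTransform c f y' + (c x y : EReal)
  rw [cTransform_subdiff_eq hb hy ht]
  have h1 : ((c x y' - t : ℝ) : EReal) ≤ cTransform c f y' := by
    have : ((c x y' - t : ℝ) : EReal) = (c x y' : EReal) - f x := by
      rw [ht, ← EReal.coe_sub]
    rw [this]
    exact le_iSup (fun x' => (c x' y' : EReal) - f x') x
  calc ((c x y - t : ℝ) : EReal) + (c x y' : EReal)
      = ((c x y' - t : ℝ) : EReal) + (c x y : EReal) := by norm_cast; ring
    _ ≤ cTransform c f y' + (c x y : EReal) := add_le_add_left h1 _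

lemma biconj_at {f : X → EReal} (hb : ∀ x, f x ≠ ⊥) (hfin : ∃ x, f x ≠ ⊤)
    {x : X} {y : Y} (hy : y ∈ cSubdiff c f x) :
    cTransform (fun y x => c x y) (cTransform c f) x = f x := by
  refine le_antisymm (double_le c f x) ?_
  obtain ⟨t, ht⟩ := subdiff_finite hb hfin hy
  calc f x = (c x y : EReal) - cTransform c f y := by
        rw [cTransform_subdiff_eq hb hy ht, ht, ← EReal.coe_sub]; norm_cast; ring
    _ ≤ _ := le_iSup (fun y' => (c x y' : EReal) - cTransform c f y') y

lemma subdiff_rigid {h : X → EReal} (hb : ∀ x, h x ≠ ⊥) (hfin : ∃ x, h x ≠ ⊤)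
    {x s : X} {y : Y} (hx : y ∈ cSubdiff c h x) (hs : y ∈ cSubdiff c h s) :
    h x = h s + ((c x y - c s y : ℝ) : EReal) := by
  obtain ⟨u, hu⟩ := subdiff_finite hb hfin hx
  obtain ⟨t, ht⟩ := subdiff_finite hb hfin hs
  have h1 := hx s; have h2 := hs x
  rw [hu, ht] at h1 h2 ⊢
  norm_cast at h1 h2 ⊢
  linarith

lemma antideriv_finite {f : X → EReal} {M : X → Set Y} (hf : IsCAntiderivative c f M)
    {x : X} (hx : x ∈ mapDom M) : ∃ t : ℝ, f x = (t : EReal) := by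
  obtain ⟨y, hy⟩ := hx
  exact subdiff_finite hf.1.1 hf.1.2 (hf.2 x y hy)

lemma antideriv_dual {f : X → EReal} {M : X → Set Y} (hf : IsCAntiderivative c f M)
    (hdom : ∃ x y, y ∈ M x) :
    IsCAntiderivative (fun y x => c x y) (cTransform c f) (mapInv M) := by
  obtain ⟨x0, y0, h0⟩ := hdom
  refine ⟨⟨?_, ?_⟩, ?_⟩
  · intro y hbot
    obtain ⟨x1, hx1⟩ := hf.1.2
    obtain ⟨u, hu⟩ : ∃ u : ℝ, f x1 = (u : EReal) := ⟨_, (EReal.coe_toReal hx1 (hf.1.1 x1)).symm⟩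
    have h1 : (c x1 y : EReal) - f x1 ≤ cTransform c f y :=
      le_iSup (fun x' => (c x' y : EReal) - f x') x1
    rw [hu, ← EReal.coe_sub, hbot] at h1
    exact (EReal.bot_lt_coe _).not_ge h1
  · refine ⟨y0, ?_⟩
    obtain ⟨t, ht⟩ := subdiff_finite hf.1.1 hf.1.2 (hf.2 x0 y0 h0)
    rw [cTransform_subdiff_eq hf.1.1 (hf.2 x0 y0 h0) ht]
    exact EReal.coe_ne_top _
  · intro y x hxy
    exact subdiff_dual hf.1.1 hf.1.2 (hf.2 x y hxy)

lemma family_map {f : X → EReal} {M : X → Set Y} {S : Set X}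
    (hf : IsCAntiderivative c f M) (hS : S.Nonempty) (hSdom : S ⊆ mapDom M)
    {h : X → EReal} (hh : h ∈ cFamily c f S M) :
    cTransform c h ∈ cFamily (fun y x => c x y) (cTransform c f) (mapImageOn M S) (mapInv M) := by
  obtain ⟨hconv, hanti, hagree⟩ := hh
  obtain ⟨s0, hs0⟩ := hS
  obtain ⟨y0, hy0⟩ := hSdom hs0
  have hanti' : IsCAntiderivative c h M := ⟨hconv.1, hanti⟩
  have hdual := antideriv_dual hanti' ⟨s0, y0, hy0⟩
  refine ⟨⟨hdual.1, h, hconv.1, rfl⟩, hdual.2, ?_⟩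
  rintro y ⟨s, hsS, hys⟩
  obtain ⟨t, ht⟩ := subdiff_finite hconv.1.1 hconv.1.2 (hanti s y hys)
  obtain ⟨t', ht'⟩ := subdiff_finite hf.1.1 hf.1.2 (hf.2 s y hys)
  have htt : t = t' := by
    have h1 := hagree s hsS
    rw [ht, ht'] at h1
    exact_mod_cast h1
  rw [cTransform_subdiff_eq hconv.1.1 (hanti s y hys) ht,
    cTransform_subdiff_eq hf.1.1 (hf.2 s y hys) ht', htt]

lemma family_eq {f : X → EReal} {M : X → Set Y} {S : Set X}
    (hf : IsCAntiderivative c f M) (hSdom : S ⊆ mapDom M) :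
    cFamily c (cTransform (fun y x => c x y) (cTransform c f))
        (mapImageOn (mapInv M) (mapImageOn M S)) M = cFamily c f S M := by
  ext h
  constructor
  · rintro ⟨h1, h2, h3⟩
    refine ⟨h1, h2, fun s hs => ?_⟩
    obtain ⟨y, hy⟩ := hSdom hs
    have hsmem : s ∈ mapImageOn (mapInv M) (mapImageOn M S) := ⟨y, ⟨s, hs, hy⟩, hy⟩
    rw [h3 s hsmem]
    exact biconj_at hf.1.1 hf.1.2 (hf.2 s y hy)
  · rintro ⟨h1, h2, h3⟩
    refine ⟨h1, h2, ?_⟩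
    rintro x ⟨y, ⟨s, hsS, hys⟩, hxy⟩
    rw [biconj_at hf.1.1 hf.1.2 (hf.2 x y hxy)]
    have e1 := subdiff_rigid h1.1.1 h1.1.2 (h2 x y hxy) (h2 s y hys)
    have e2 := subdiff_rigid hf.1.1 hf.1.2 (hf.2 x y hxy) (hf.2 s y hys)
    rw [e1, e2, h3 s hsS]

lemma inv_family_map {f : X → EReal} {M : X → Set Y} {S : Set X}
    (hf : IsCAntiderivative c f M) (hS : S.Nonempty) (hSdom : S ⊆ mapDom M)
    {g : Y → EReal}
    (hg : g ∈ cFamily (fun y x => c x y) (cTransform c f) (mapImageOn M S) (mapInv M)) :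
    cTransform (fun y x => c x y) g ∈ cFamily c f S M := by
  obtain ⟨s0, hs0⟩ := hS
  obtain ⟨y0, hy0⟩ := hSdom hs0
  have hdual := antideriv_dual hf ⟨s0, y0, hy0⟩
  have hMS : (mapImageOn M S).Nonempty := ⟨y0, s0, hs0, hy0⟩
  have hMSdom : mapImageOn M S ⊆ mapDom (mapInv M) := by
    rintro y ⟨s, hs, hys⟩; exact ⟨s, hys⟩
  have h2 : cTransform (fun y x => c x y) g ∈
      cFamily c (cTransform (fun y x => c x y) (cTransform c f))
        (mapImageOn (mapInv M) (mapImageOn M S)) M :=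
    family_map (c := fun y x => c x y) hdual hMS hMSdom hg
  rwa [family_eq hf hSdom] at h2

lemma transform_lowerEnv (c : X → Y → ℝ) (F : Set (X → EReal)) (y : Y) :
    cTransform c (fun x => ⨅ h ∈ F, h x) y = ⨆ h ∈ F, cTransform c h y := by
  have e1 : ∀ x, (⨅ h ∈ F, h x) = ⨅ h : F, (h : X → EReal) x := fun x =>
    (iInf_subtype'' F fun h => h x).symm
  calc cTransform c (fun x => ⨅ h ∈ F, h x) y
      = ⨆ x, ⨆ h : F, ((c x y : EReal) - (h : X → EReal) x) := by
        refine iSup_congr fun x => ?_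
        rw [show ((fun x => ⨅ h ∈ F, h x) x) = ⨅ h : F, (h : X → EReal) x from e1 x]
        exact coe_sub_iInf (c x y) fun h : F => (h : X → EReal) x
    _ = ⨆ h : F, ⨆ x, ((c x y : EReal) - (h : X → EReal) x) := iSup_comm
    _ = ⨆ h : F, cTransform c (h : X → EReal) y := rfl
    _ = ⨆ h ∈ F, cTransform c h y := iSup_subtype'' F fun h => cTransform c h y

lemma mainA {f : X → EReal} {M : X → Set Y}
    (hf : IsCAntiderivative c f M) {S : Set X} (hS : S.Nonempty) (hSdom : S ⊆ mapDom M) :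
    cTransform c (lowerEnv c f S M) =
      upperEnv (fun y x => c x y) (cTransform c f) (mapImageOn M S) (mapInv M) := by
  funext y
  have e0 : cTransform c (lowerEnv c f S M) y = ⨆ h ∈ cFamily c f S M, cTransform c h y :=
    transform_lowerEnv c (cFamily c f S M) y
  rw [e0]
  apply le_antisymm
  · refine iSup₂_le fun h hh => ?_
    exact le_iSup₂ (f := fun (g : Y → EReal) (_ : g ∈ cFamily (fun y x => c x y)
      (cTransform c f) (mapImageOn M S) (mapInv M)) => g y) _ (family_map hf hS hSdom hh)
  · refine iSup₂_le fun g hg => ?_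
    have hmem : cTransform (fun y x => c x y) g ∈ cFamily c f S M :=
      inv_family_map hf hS hSdom hg
    have hle : g y ≤ cTransform c (cTransform (fun y x => c x y) g) y :=
      cconvex_le_double (c := fun y x => c x y) hg.1 y
    exact hle.trans (le_iSup₂ (f := fun (h : X → EReal) (_ : h ∈ cFamily c f S M) =>
      cTransform c h y) _ hmem)

lemma sup_mem {f : X → EReal} {M : X → Set Y} {S : Set X}
    (hf : IsCAntiderivative c f M) (hS : S.Nonempty) (hSdom : S ⊆ mapDom M)
    (hne : (cFamily c f S M).Nonempty) : upperEnv c f S M ∈ cFamily c f S M := by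
  obtain ⟨h0, hh0⟩ := hne
  have hle : ∀ h ∈ cFamily c f S M, ∀ x, h x ≤ upperEnv c f S M x := fun h hh x =>
    le_iSup₂ (f := fun (h : X → EReal) (_ : h ∈ cFamily c f S M) => h x) h hh
  have hsub : ∀ x, upperEnv c f S M x = ⨆ h : cFamily c f S M, (h : X → EReal) x := fun x =>
    (iSup_subtype'' (cFamily c f S M) fun h => h x).symm
  have hagree : ∀ s ∈ S, upperEnv c f S M s = f s := by
    intro s hs
    apply le_antisymm
    · exact iSup₂_le fun h hh => (hh.2.2 s hs).le
    · rw [← hh0.2.2 s hs]; exact hle h0 hh0 s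
  have hanti : ∀ x y, y ∈ M x → y ∈ cSubdiff c (upperEnv c f S M) x := by
    intro x y hy x'
    show upperEnv c f S M x + (c x' y : EReal) ≤ upperEnv c f S M x' + (c x y : EReal)
    rw [hsub x, iSup_add_coe]
    refine iSup_le fun h => ?_
    calc (h : X → EReal) x + (c x' y : EReal) ≤ (h : X → EReal) x' + (c x y : EReal) :=
          h.2.2.1 x y hy x'
      _ ≤ upperEnv c f S M x' + (c x y : EReal) := add_le_add_left (hle _ h.2 x') _
  have hγb : ∀ x, upperEnv c f S M x ≠ ⊥ := by
    intro x hbot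
    have h1 := hle h0 hh0 x
    rw [hbot] at h1
    exact hh0.1.1.1 x (le_bot_iff.1 h1)
  obtain ⟨s0, hs0⟩ := hS
  obtain ⟨y0, hy0⟩ := hSdom hs0
  obtain ⟨t0, ht0⟩ := antideriv_finite hf (hSdom hs0)
  have hγfin : ∃ x, upperEnv c f S M x ≠ ⊤ :=
    ⟨s0, by rw [hagree s0 hs0, ht0]; exact EReal.coe_ne_top _⟩
  have hγanti : IsCAntiderivative c (upperEnv c f S M) M := ⟨⟨hγb, hγfin⟩, hanti⟩
  have hdual := antideriv_dual hγanti ⟨s0, y0, hy0⟩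
  refine ⟨⟨⟨hγb, hγfin⟩, cTransform c (upperEnv c f S M), hdual.1, ?_⟩, hanti, hagree⟩
  funext x
  apply le_antisymm
  · refine iSup₂_le fun h hh => ?_
    calc h x ≤ cTransform (fun y x => c x y) (cTransform c h) x := cconvex_le_double hh.1 x
      _ ≤ cTransform (fun y x => c x y) (cTransform c (upperEnv c f S M)) x :=
          cTransform_anti (c := fun y x => c x y)
            (cTransform_anti (c := c) (hle h hh)) x
  · exact double_le c (upperEnv c f S M) x

end AuxLemmas

/-- `(α_{[c,f|_S,M]})^c = γ_{[c, f^c|_{M(S)}, M⁻¹]}` and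
`(γ_{[c,f|_S,M]})^c = α_{[c, f^c|_{M(S)}, M⁻¹]}`. -/
theorem statement5 [Nonempty X] [Nonempty Y] (c : X → Y → ℝ) (f : X → EReal)
    (M : X → Set Y) (hf : IsCAntiderivative c f M)
    (S : Set X) (hS : S.Nonempty) (hSdom : S ⊆ mapDom M) :
    cTransform c (lowerEnv c f S M) =
        upperEnv (fun y x => c x y) (cTransform c f) (mapImageOn M S) (mapInv M) ∧
      cTransform c (upperEnv c f S M) =
        lowerEnv (fun y x => c x y) (cTransform c f) (mapImageOn M S) (mapInv M) := by
  refine ⟨mainA hf hS hSdom, ?_⟩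
  funext y
  show cTransform c (upperEnv c f S M) y
      = ⨅ g ∈ cFamily (fun y x => c x y) (cTransform c f) (mapImageOn M S) (mapInv M), g y
  apply le_antisymm
  · refine le_iInf₂ fun g hg => ?_
    have h1 : cTransform (fun y x => c x y) g ∈ cFamily c f S M :=
      inv_family_map hf hS hSdom hg
    have h2 : ∀ x, cTransform (fun y x => c x y) g x ≤ upperEnv c f S M x :=
      fun x => le_iSup₂ (f := fun (h : X → EReal) (_ : h ∈ cFamily c f S M) => h x) _ h1
    calc cTransform c (upperEnv c f S M) y
        ≤ cTransform c (cTransform (fun y x => c x y) g) y := cTransform_anti h2 y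
      _ ≤ g y := double_le (fun y x => c x y) g y
  · by_cases hne : (cFamily c f S M).Nonempty
    · have hγ := sup_mem hf hS hSdom hne
      have hmem := family_map hf hS hSdom hγ
      exact iInf₂_le _ hmem
    · have hγbot : ∀ x, upperEnv c f S M x = ⊥ := fun x =>
        le_bot_iff.1 (iSup₂_le fun h hh => absurd ⟨h, hh⟩ hne)
      have htop : cTransform c (upperEnv c f S M) y = ⊤ := by
        have x0 : X := Classical.arbitrary X
        refine top_le_iff.1 ?_
        calc (⊤ : EReal) = (c x0 y : EReal) - upperEnv c f S M x0 := by
              rw [hγbot x0, EReal.coe_sub_bot]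
          _ ≤ _ := le_iSup (fun x => (c x y : EReal) - upperEnv c f S M x) x0
      rw [htop]
      exact le_top
end
end

section
/- Let f : X → (-∞,+∞] be a c-antiderivative of a multivalued mapping M : X ⇉ Y and take S = dom(M). Then the pointwise supremum of the family 𝒜_{[c,f|_{dom(M)},M]} satisfies γ_{[c,f|_{dom(M)},M]} = (f + ι_{dom(M)})^{cc}, where ι_{dom(M)} is the indicator function of dom(M) (equal to 0 on dom(M) and +∞ off it) and f^{cc} := (f^c)^c is the c-convexification. -/
noncomputable section

open scoped Classical

variable {X Y : Type*}

/-! ### Auxiliary lemmas -/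

lemma EReal.exists_coe {a : EReal} (h1 : a ≠ ⊥) (h2 : a ≠ ⊤) : ∃ r : ℝ, a = r := by
  induction a using EReal.rec with
  | bot => exact absurd rfl h1
  | coe x => exact ⟨x, rfl⟩
  | top => exact absurd rfl h2

lemma EReal.sub_sub_cancel' (r : ℝ) (a : EReal) : (r:EReal) - ((r:EReal) - a) = a := by
  induction a using EReal.rec with
  | bot => simp [EReal.sub_top]
  | coe x => rw [← EReal.coe_sub, ← EReal.coe_sub]; norm_num
  | top => simp [EReal.sub_top, EReal.add_top_of_ne_bot (EReal.coe_ne_bot r)]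

lemma cTransform_antitone (c : X → Y → ℝ) {f g : X → EReal} (h : ∀ x, f x ≤ g x) (y : Y) :
    cTransform c g y ≤ cTransform c f y :=
  iSup_mono fun x => EReal.sub_le_sub le_rfl (h x)

lemma cc_le (c : X → Y → ℝ) (f : X → EReal) (x : X) :
    cTransform (fun y x => c x y) (cTransform c f) x ≤ f x := by
  refine iSup_le fun y => ?_
  have h1 : (c x y : EReal) - f x ≤ cTransform c f y :=
    le_iSup (fun x' => (c x' y : EReal) - f x') x
  calc ((c x y : EReal)) - cTransform c f y ≤ (c x y : EReal) - ((c x y : EReal) - f x) :=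
        EReal.sub_le_sub le_rfl h1
    _ = f x := EReal.sub_sub_cancel' _ _

lemma cconvex_eq_cc {c : X → Y → ℝ} {h : X → EReal} (hc : IsCConvex c h) (x : X) :
    h x = cTransform (fun y x => c x y) (cTransform c h) x := by
  obtain ⟨-, g, -, rfl⟩ := hc
  refine le_antisymm ?_ (cc_le _ _ _)
  exact cTransform_antitone (fun y x => c x y)
    (fun y => cc_le (fun y x => c x y) g y) x

/-- In the case `S = dom M`, the upper envelope satisfies
`γ_{[c, f|_{dom M}, M]} = (f + ι_{dom M})^{cc}`. -/
theorem statement6 [Nonempty X] [Nonempty Y] (c : X → Y → ℝ) (f : X → EReal)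
    (M : X → Set Y) (hf : IsCAntiderivative c f M)
    (hdom : (mapDom M).Nonempty) :
    upperEnv c f (mapDom M) M =
      cTransform (fun y x => c x y)
        (cTransform c (fun x => f x + indicatorE (mapDom M) x)) := by
  classical
  obtain ⟨⟨hne_bot, x₀, hx₀top⟩, hsub⟩ := hf
  obtain ⟨s, y₀, hy₀⟩ := hdom
  have hs : s ∈ mapDom M := ⟨y₀, hy₀⟩
  set φ : X → EReal := fun x => f x + indicatorE (mapDom M) x with hφ
  -- f is finite on dom M
  have hfin : ∀ x ∈ mapDom M, ∃ r : ℝ, f x = (r : EReal) := by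
    rintro x ⟨y, hy⟩
    refine EReal.exists_coe (hne_bot x) fun htop => ?_
    have h := hsub x y hy x₀
    rw [htop, EReal.top_add_of_ne_bot (EReal.coe_ne_bot _)] at h
    exact absurd (top_le_iff.mp h)
      (EReal.add_lt_top hx₀top (EReal.coe_ne_top _)).ne
  have hphi_mem : ∀ x ∈ mapDom M, φ x = f x := by
    intro x hx; simp [hφ, indicatorE, hx]
  have hphi_not : ∀ x ∉ mapDom M, φ x = ⊤ := by
    intro x hx
    simp only [hφ, indicatorE, hx, if_neg, if_false]
    exact EReal.add_top_of_ne_bot (hne_bot x)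
  -- key computation of the c-transform of φ at points of the graph
  have key : ∀ x, x ∈ mapDom M → ∀ y ∈ M x, ∀ r : ℝ, f x = (r : EReal) →
      cTransform c φ y = ((c x y - r : ℝ) : EReal) := by
    intro x hx y hy r hr
    refine le_antisymm (iSup_le fun x' => ?_) ?_
    · by_cases hx' : x' ∈ mapDom M
      · obtain ⟨t, ht⟩ := hfin x' hx'
        rw [hphi_mem x' hx', ht, ← EReal.coe_sub, EReal.coe_le_coe_iff]
        have h := hsub x y hy x'
        rw [hr, ht, ← EReal.coe_add, ← EReal.coe_add, EReal.coe_le_coe_iff] at h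
        linarith
      · rw [hphi_not x' hx', EReal.sub_top]; exact bot_le
    · have h := le_iSup (fun x' => (c x' y : EReal) - φ x') x
      rwa [hphi_mem x hx, hr, ← EReal.coe_sub] at h
  set g : Y → EReal := cTransform c φ with hg
  set F : X → EReal := cTransform (fun y x => c x y) g with hF
  obtain ⟨rs, hrs⟩ := hfin s hs
  have hgs : g y₀ = ((c s y₀ - rs : ℝ) : EReal) := key s hs y₀ hy₀ rs hrs
  have hg_bot : ∀ y, g y ≠ ⊥ := by
    intro y hbot
    have h := le_iSup (fun x' => (c x' y : EReal) - φ x') s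
    rw [hphi_mem s hs, hrs, ← EReal.coe_sub] at h
    have h' : ((c s y - rs : ℝ) : EReal) ≤ g y := h
    rw [hbot] at h'
    exact absurd (le_bot_iff.mp h') (EReal.coe_ne_bot _)
  -- F agrees with f on dom M
  have hA : ∀ x ∈ mapDom M, F x = f x := by
    intro x hx
    obtain ⟨y, hy⟩ := hx
    obtain ⟨r, hr⟩ := hfin x ⟨y, hy⟩
    have hgy : g y = ((c x y - r : ℝ) : EReal) := key x ⟨y, hy⟩ y hy r hr
    refine le_antisymm (le_trans (cc_le c φ x) (le_of_eq (hphi_mem x ⟨y, hy⟩))) ?_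
    have h := le_iSup (fun y' => (c x y' : EReal) - g y') y
    rw [hgy, ← EReal.coe_sub] at h
    rw [hr]
    refine le_trans (le_of_eq ?_) h
    norm_num
  -- properness
  have hPg : ProperFn g := by
    refine ⟨hg_bot, y₀, ?_⟩
    rw [hgs]; exact EReal.coe_ne_top _
  have hPF : ProperFn F := by
    constructor
    · intro x hbot
      have h := le_iSup (fun y' => (c x y' : EReal) - g y') y₀
      rw [hgs, ← EReal.coe_sub] at h
      have h' : ((c x y₀ - (c s y₀ - rs) : ℝ) : EReal) ≤ F x := h
      rw [hbot] at h'
      exact absurd (le_bot_iff.mp h') (EReal.coe_ne_bot _)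
    · exact ⟨s, by rw [hA s hs, hrs]; exact EReal.coe_ne_top _⟩
  have hconv : IsCConvex c F := ⟨hPF, g, hPg, rfl⟩
  -- subdifferential property
  have hE : ∀ x y, y ∈ M x → y ∈ cSubdiff c F x := by
    intro x y hy x'
    have hx : x ∈ mapDom M := ⟨y, hy⟩
    obtain ⟨r, hr⟩ := hfin x hx
    have hgy : g y = ((c x y - r : ℝ) : EReal) := key x hx y hy r hr
    have h1 : ((c x' y - (c x y - r) : ℝ) : EReal) ≤ F x' := by
      have h := le_iSup (fun y' => (c x' y' : EReal) - g y') y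
      rwa [hgy, ← EReal.coe_sub] at h
    have h2 : F x' + (c x y : EReal) ≥ ((c x' y - (c x y - r) + c x y : ℝ) : EReal) := by
      rw [EReal.coe_add]
      exact add_le_add_left h1 _
    rw [hA x hx, hr, ← EReal.coe_add]
    refine le_trans (le_of_eq ?_) h2
    rw [EReal.coe_eq_coe_iff]
    ring
  have hmem : F ∈ cFamily c f (mapDom M) M := ⟨hconv, hE, hA⟩
  funext x
  refine le_antisymm (iSup₂_le fun h hh => ?_) ?_
  · rw [cconvex_eq_cc hh.1 x]
    have hle : ∀ x', h x' ≤ φ x' := by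
      intro x'
      by_cases hx' : x' ∈ mapDom M
      · rw [hphi_mem x' hx', ← hh.2.2 x' hx']
      · rw [hphi_not x' hx']; exact le_top
    exact cTransform_antitone (fun y x => c x y)
      (cTransform_antitone c hle) x
  · exact le_iSup₂ (f := fun (h : X → EReal) (_ : h ∈ cFamily c f (mapDom M) M) => h x) F hmem
end
end

section
/- A proper multivalued mapping M : X ⇉ Y is c-cyclically monotone if and only if it has a proper c-antiderivative. Moreover, for any s ∈ dom(M), Rockafellar's function R_{[c,M,s]} is proper if and only if M is proper and c-cyclically monotone. -/
noncomputable section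

open scoped Classical

variable {X Y : Type*}

section Statement10Aux
variable {X Y : Type*}


/-- Set of chain values for Rockafellar's function. -/
def CV (c : X → Y → ℝ) (M : X → Set Y) (s x : X) : Set ℝ :=
  {v | ∃ n, 0 < n ∧ ∃ xs : ℕ → X, ∃ ys : ℕ → Y,
    (xs 0 = s ∧ ∀ i < n, ys i ∈ M (xs i)) ∧
    v = ∑ i ∈ Finset.range n,
      (c (if i + 1 < n then xs (i + 1) else x) (ys i) - c (xs i) (ys i))}



theorem rock_eq (c : X → Y → ℝ) (M : X → Set Y) (s x : X) :
    rockafellar c M s x = ⨆ v ∈ CV c M s x, (v : EReal) := by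
  apply le_antisymm
  · refine iSup_le fun n => iSup_le fun hn => iSup_le fun xs => iSup_le fun ys =>
      iSup_le fun hch => ?_
    exact le_iSup₂ (f := fun (v : ℝ) (_ : v ∈ CV c M s x) => (v : EReal)) _
      ⟨n, hn, xs, ys, hch, rfl⟩
  · refine iSup₂_le fun v hv => ?_
    obtain ⟨n, hn, xs, ys, hch, rfl⟩ := hv
    exact le_iSup_of_le n <| le_iSup_of_le hn <| le_iSup_of_le xs <| le_iSup_of_le ys <|
      le_iSup_of_le hch le_rfl

theorem cv_le_rock {c : X → Y → ℝ} {M : X → Set Y} {s x : X} {v : ℝ}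
    (hv : v ∈ CV c M s x) : (v : EReal) ≤ rockafellar c M s x := by
  rw [rock_eq]; exact le_iSup₂ (f := fun (v : ℝ) (_ : v ∈ CV c M s x) => (v : EReal)) _ hv

theorem rock_le {c : X → Y → ℝ} {M : X → Set Y} {s x : X} {b : EReal}
    (h : ∀ v ∈ CV c M s x, (v : EReal) ≤ b) : rockafellar c M s x ≤ b := by
  rw [rock_eq]; exact iSup₂_le h

theorem exists_cv_of_lt {c : X → Y → ℝ} {M : X → Set Y} {s x : X} {a : EReal}
    (ha : a < rockafellar c M s x) : ∃ v ∈ CV c M s x, a < (v : EReal) := by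
  rw [rock_eq] at ha
  obtain ⟨v, hv⟩ := lt_iSup_iff.mp ha
  rw [lt_iSup_iff] at hv
  obtain ⟨hmem, hlt⟩ := hv
  exact ⟨v, hmem, hlt⟩

theorem cv_nonempty {c : X → Y → ℝ} {M : X → Set Y} {s : X} (hs : s ∈ mapDom M) (x : X) :
    (CV c M s x).Nonempty := by
  obtain ⟨y0, hy0⟩ := hs
  exact ⟨c x y0 - c s y0, 1, one_pos, fun _ => s, fun _ => y0,
    ⟨rfl, fun i _ => hy0⟩, by simp⟩

theorem cv_extend {c : X → Y → ℝ} {M : X → Set Y} {s x x' : X} {y : Y} {v : ℝ}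
    (hy : y ∈ M x) (hv : v ∈ CV c M s x) : v + (c x' y - c x y) ∈ CV c M s x' := by
  obtain ⟨n, hn, xs, ys, ⟨hx0, hmem⟩, rfl⟩ := hv
  refine ⟨n + 1, Nat.succ_pos n, (fun i => if i < n then xs i else x),
    (fun i => if i < n then ys i else y), ⟨by simp [hn, hx0], fun i hi => ?_⟩, ?_⟩
  · by_cases h : i < n
    · simpa [h] using hmem i h
    · have : i = n := by omega
      simp [this, hy]
  · rw [Finset.sum_range_succ]
    have hlast : c (if n + 1 < n + 1 then (if n + 1 < n then xs (n+1) else x) else x')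
        (if n < n then ys n else y) - c (if n < n then xs n else x) (if n < n then ys n else y)
        = c x' y - c x y := by simp
    rw [hlast]
    congr 1
    apply Finset.sum_congr rfl
    intro i hi
    rw [Finset.mem_range] at hi
    have h1 : i + 1 < n + 1 := by omega
    by_cases h2 : i + 1 < n
    · have h3 : i < n := by omega
      simp [h1, h2, h3, hi]
    · have h3 : ¬ (i + 1 < n) := h2
      simp [h1, h3, hi]

theorem rock_ne_bot {c : X → Y → ℝ} {M : X → Set Y} {s : X} (hs : s ∈ mapDom M) (x : X) :
    rockafellar c M s x ≠ ⊥ := by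
  obtain ⟨v, hv⟩ := cv_nonempty (c := c) hs x
  exact fun h => by have := cv_le_rock hv; simp [h] at this

theorem rock_antider {c : X → Y → ℝ} {M : X → Set Y} {s x : X} {y : Y}
    (hy : y ∈ M x) (x' : X) :
    rockafellar c M s x + ((c x' y : ℝ) : EReal) ≤ rockafellar c M s x' + ((c x y : ℝ) : EReal) := by
  set d : ℝ := c x' y - c x y with hd
  have key : rockafellar c M s x + (d : EReal) ≤ rockafellar c M s x' := by
    apply le_of_forall_lt_imp_le_of_dense
    intro a ha
    induction a with
    | bot => exact bot_le
    | top => exact absurd ha (not_lt.mpr le_top)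
    | coe ra =>
      have h1 : ((ra - d : ℝ) : EReal) < rockafellar c M s x := by
        rcases eq_or_ne (rockafellar c M s x) ⊤ with h | h
        · rw [h]; exact EReal.coe_lt_top _
        · have hb : rockafellar c M s x ≠ ⊥ := by
            intro hb; rw [hb] at ha; simp at ha
          lift rockafellar c M s x to ℝ using ⟨h, hb⟩ with r hr
          rw [← EReal.coe_add, EReal.coe_lt_coe_iff] at ha
          rw [EReal.coe_lt_coe_iff]
          linarith
      obtain ⟨v, hv, hlt⟩ := exists_cv_of_lt h1
      have hv' : v + d ∈ CV c M s x' := cv_extend hy hv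
      have : ((ra : ℝ) : EReal) < ((v + d : ℝ) : EReal) := by
        rw [EReal.coe_lt_coe_iff] at hlt ⊢; linarith
      exact le_of_lt (lt_of_lt_of_le this (cv_le_rock hv'))
  calc rockafellar c M s x + ((c x' y : ℝ) : EReal)
      = (rockafellar c M s x + (d : EReal)) + ((c x y : ℝ) : EReal) := by
        rw [add_assoc, ← EReal.coe_add]; norm_num [hd]
    _ ≤ rockafellar c M s x' + ((c x y : ℝ) : EReal) := add_le_add_left key _






theorem sum_cycle (g : ℕ → ℝ) (n : ℕ) :
    ∑ i ∈ Finset.range n, g ((i + 1) % n) = ∑ i ∈ Finset.range n, g i := by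
  cases n with
  | zero => simp
  | succ m =>
    rw [Finset.sum_range_succ, Finset.sum_range_succ']
    simp only [Nat.mod_self]
    congr 1
    apply Finset.sum_congr rfl
    intro i hi
    rw [Finset.mem_range] at hi
    rw [Nat.mod_eq_of_lt (by omega)]

theorem rock_self_le {c : X → Y → ℝ} {M : X → Set Y} {s : X}
    (hcm : IsCCyclicallyMonotone c M) : rockafellar c M s s ≤ 0 := by
  apply rock_le
  rintro v ⟨n, hn, xs, ys, ⟨hx0, hmem⟩, rfl⟩
  have hmono := hcm n xs ys hmem
  have heq : ∑ i ∈ Finset.range n,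
      (c (if i + 1 < n then xs (i + 1) else s) (ys i) - c (xs i) (ys i))
      = - ∑ i ∈ Finset.range n, (c (xs i) (ys i) - c (xs ((i + 1) % n)) (ys i)) := by
    rw [← Finset.sum_neg_distrib]
    apply Finset.sum_congr rfl
    intro i hi
    rw [Finset.mem_range] at hi
    by_cases h : i + 1 < n
    · rw [if_pos h, Nat.mod_eq_of_lt h]; ring
    · have : i + 1 = n := by omega
      rw [if_neg h, this, Nat.mod_self, hx0]; ring
  have : (∑ i ∈ Finset.range n,
      (c (if i + 1 < n then xs (i + 1) else s) (ys i) - c (xs i) (ys i))) ≤ 0 := by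
    rw [heq]; linarith
  calc ((∑ i ∈ Finset.range n,
      (c (if i + 1 < n then xs (i + 1) else s) (ys i) - c (xs i) (ys i)) : ℝ) : EReal)
      ≤ ((0 : ℝ) : EReal) := EReal.coe_le_coe_iff.mpr this
    _ = 0 := by norm_num

theorem rock_proper {c : X → Y → ℝ} {M : X → Set Y} {s : X} (hs : s ∈ mapDom M)
    (hcm : IsCCyclicallyMonotone c M) : ProperFn (rockafellar c M s) :=
  ⟨rock_ne_bot hs, s, fun h => by
    have := rock_self_le (s := s) hcm
    rw [h] at this
    exact absurd this (by simp)⟩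

theorem cyc_of_antider {c : X → Y → ℝ} {M : X → Set Y} {f : X → EReal}
    (hf : IsCAntiderivative c f M) : IsCCyclicallyMonotone c M := by
  obtain ⟨⟨hbot, x₀, htop⟩, hsub⟩ := hf
  intro n xs ys hv
  rcases Nat.eq_zero_or_pos n with hn | hn
  · simp [hn]
  lift f x₀ to ℝ using ⟨htop, hbot x₀⟩ with r₀ hr₀
  -- each f (xs i) is finite for i < n
  have hfin : ∀ i < n, f (xs i) ≠ ⊤ := by
    intro i hi hEq
    have H := hsub (xs i) (ys i) (hv i hi) x₀
    rw [hEq, ← hr₀] at H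
    rw [EReal.top_add_coe, ← EReal.coe_add] at H
    exact (EReal.coe_ne_top _) (top_le_iff.mp H)
  set r : ℕ → ℝ := fun i => (f (xs i)).toReal with hr
  have hcoe : ∀ i < n, ((r i : ℝ) : EReal) = f (xs i) := fun i hi =>
    EReal.coe_toReal (hfin i hi) (hbot _)
  have key : ∀ i < n, r i + c (xs ((i + 1) % n)) (ys i) ≤ r ((i + 1) % n) + c (xs i) (ys i) := by
    intro i hi
    have hi' : (i + 1) % n < n := Nat.mod_lt _ hn
    have H := hsub (xs i) (ys i) (hv i hi) (xs ((i + 1) % n))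
    rw [← hcoe i hi, ← hcoe _ hi', ← EReal.coe_add, ← EReal.coe_add,
      EReal.coe_le_coe_iff] at H
    exact H
  have hsum : ∑ i ∈ Finset.range n, (r i + c (xs ((i + 1) % n)) (ys i))
      ≤ ∑ i ∈ Finset.range n, (r ((i + 1) % n) + c (xs i) (ys i)) := by
    apply Finset.sum_le_sum
    intro i hi
    exact key i (Finset.mem_range.mp hi)
  rw [Finset.sum_add_distrib, Finset.sum_add_distrib, sum_cycle r n] at hsum
  rw [Finset.sum_sub_distrib]
  linarith

theorem cyc_of_rock_proper {c : X → Y → ℝ} {M : X → Set Y} {s : X} (hs : s ∈ mapDom M)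
    (hp : ProperFn (rockafellar c M s)) : IsCCyclicallyMonotone c M := by
  intro n xs ys hv
  rcases Nat.eq_zero_or_pos n with hn | hn
  · simp [hn]
  by_contra hneg
  push_neg at hneg
  set σ : ℝ := ∑ i ∈ Finset.range n, (c (xs ((i + 1) % n)) (ys i) - c (xs i) (ys i)) with hσ
  have hσpos : 0 < σ := by
    rw [hσ, Finset.sum_sub_distrib]
    rw [Finset.sum_sub_distrib] at hneg
    linarith
  -- going partially around the cycle
  have loop : ∀ j ≤ n, ∀ v ∈ CV c M s (xs 0),
      v + ∑ i ∈ Finset.range j, (c (xs ((i + 1) % n)) (ys i) - c (xs i) (ys i))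
        ∈ CV c M s (xs (j % n)) := by
    intro j
    induction j with
    | zero => intro _ v hvv; simpa [Nat.mod_eq_of_lt hn] using hvv
    | succ m ih =>
      intro hm v hvv
      have hmn : m < n := by omega
      have hw := ih (by omega) v hvv
      rw [Nat.mod_eq_of_lt hmn] at hw
      have := cv_extend (x' := xs ((m + 1) % n)) (hv m hmn) hw
      rw [Finset.sum_range_succ]
      convert this using 1
      ring
  have cycle : ∀ v ∈ CV c M s (xs 0), v + σ ∈ CV c M s (xs 0) := by
    intro v hvv
    have := loop n le_rfl v hvv
    rwa [Nat.mod_self, ← hσ] at this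
  obtain ⟨v₀, hv₀⟩ := cv_nonempty (c := c) hs (xs 0)
  have iter : ∀ k : ℕ, v₀ + k * σ ∈ CV c M s (xs 0) := by
    intro k
    induction k with
    | zero => simpa using hv₀
    | succ m ih =>
      have := cycle _ ih
      convert this using 1
      push_cast
      ring
  obtain ⟨hnb, x₁, hnt⟩ := hp
  lift rockafellar c M s x₁ to ℝ using ⟨hnt, hnb x₁⟩ with r₁ hr₁
  have bound : ∀ k : ℕ, v₀ + k * σ + (c x₁ (ys 0) - c (xs 0) (ys 0)) ≤ r₁ := by
    intro k
    have := cv_le_rock (cv_extend (x' := x₁) (hv 0 hn) (iter k))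
    rw [← hr₁, EReal.coe_le_coe_iff] at this
    exact this
  obtain ⟨k, hk⟩ := exists_nat_gt ((r₁ - v₀ - (c x₁ (ys 0) - c (xs 0) (ys 0))) / σ)
  have := bound k
  rw [div_lt_iff₀ hσpos] at hk
  linarith

end Statement10Aux

/-- A proper mapping `M` is `c`-cyclically monotone iff it has a proper
`c`-antiderivative; moreover, for any `s ∈ dom M`, Rockafellar's function `R_{[c,M,s]}`
is proper iff `M` is proper and `c`-cyclically monotone. -/
theorem statement10 [Nonempty X] [Nonempty Y] (c : X → Y → ℝ) (M : X → Set Y)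
    (hM : (mapDom M).Nonempty) :
    (IsCCyclicallyMonotone c M ↔ ∃ f : X → EReal, IsCAntiderivative c f M) ∧
      ∀ s ∈ mapDom M,
        (ProperFn (rockafellar c M s) ↔
          (mapDom M).Nonempty ∧ IsCCyclicallyMonotone c M) := by
  constructor
  · constructor
    · intro hcm
      obtain ⟨s, hs⟩ := hM
      exact ⟨rockafellar c M s, rock_proper hs hcm,
        fun x y hy x' => rock_antider hy x'⟩
    · rintro ⟨f, hf⟩
      exact cyc_of_antider hf
  · intro s hs
    constructor
    · intro hp
      exact ⟨hM, cyc_of_rock_proper hs hp⟩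
    · rintro ⟨_, hcm⟩
      exact rock_proper hs hcm
end
end
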